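/- For a unit vector x in a complex Hilbert space H, let E_x = I - x⊗x. Then the set of operators T with E_x ≤* T equals { E_x + γ·(x⊗x) : γ ∈ ℂ }. -/

import Mathlib

set_option synthInstance.maxHeartbeats 1000000
set_option maxHeartbeats 1000000

open ContinuousLinearMap

variable {H : Type*} [NormedAddCommGroup H] [InnerProductSpace ℂ H] [CompleteSpace H]

/-- The star order on bounded operators: `A ≤* B` iff `A*A = A*B` and `AA* = BA*`. -/
def starLE (A B : H →L[ℂ] H) : Prop :=
  adjoint A * A = adjoint A * B ∧ A * adjoint A = B * adjoint A

/-- The rank-one operator `x ⊗ y : z ↦ ⟨z, y⟩ x`. -/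
noncomputable def rankOne (x y : H) : H →L[ℂ] H := (innerSL ℂ y).smulRight x

lemma rankOne_apply (x y z : H) : rankOne x y z = (inner ℂ y z : ℂ) • x := rfl

omit [CompleteSpace H] in
lemma inner_self_one (x : H) (hx : ‖x‖ = 1) : (inner ℂ x x : ℂ) = 1 := by
  rw [inner_self_eq_norm_sq_to_K, hx]; norm_num

lemma rankOne_adjoint (x : H) : adjoint (rankOne x x) = rankOne x x := by
  ext z
  apply ext_inner_right ℂ
  intro w
  rw [adjoint_inner_left, rankOne_apply, rankOne_apply, inner_smul_left, inner_smul_right,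
    inner_conj_symm]
  ring

lemma rankOne_idem (x : H) (hx : ‖x‖ = 1) : rankOne x x * rankOne x x = rankOne x x := by
  ext z
  simp [mul_apply, rankOne_apply, inner_smul_right, inner_self_one x hx, smul_smul, hx]

theorem star_le_above_coprojection (x : H) (hx : ‖x‖ = 1) :
    {T : H →L[ℂ] H | starLE (1 - rankOne x x) T} =
      {T : H →L[ℂ] H | ∃ γ : ℂ, T = (1 - rankOne x x) + γ • rankOne x x} := by
  have hPadj : adjoint (rankOne x x) = rankOne x x := rankOne_adjoint x
  have hP2 : rankOne x x * rankOne x x = rankOne x x := rankOne_idem x hx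
  have hPx : rankOne x x x = x := by
    rw [rankOne_apply, inner_self_one x hx, one_smul]
  have hEadj : adjoint (1 - rankOne x x) = 1 - rankOne x x := by
    rw [← star_eq_adjoint, star_sub, star_one, star_eq_adjoint, hPadj]
  have hE2 : (1 - rankOne x x) * (1 - rankOne x x) = 1 - rankOne x x := by
    rw [mul_sub, sub_mul, sub_mul, mul_one, one_mul, hP2]
    abel
  ext T
  simp only [Set.mem_setOf_eq, starLE, hEadj]
  constructor
  · rintro ⟨h1, h2⟩
    rw [hE2] at h1 h2
    refine ⟨inner ℂ x (T x), ?_⟩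
    ext z
    have key2 : (1 - rankOne x x) z = T ((1 - rankOne x x) z) := by
      conv_lhs => rw [h2]
      rfl
    have key1 : (1 - rankOne x x) x = (1 - rankOne x x) (T x) := by
      conv_lhs => rw [h1]
      rfl
    have hEx : (1 - rankOne x x) x = 0 := by
      simp [hPx]
    have hTx : T x = (inner ℂ x (T x) : ℂ) • x := by
      have h0 : (1 - rankOne x x) (T x) = 0 := by rw [← key1, hEx]
      simpa [sub_apply, one_apply, rankOne_apply, sub_eq_zero] using h0
    have hEz : (1 - rankOne x x) z = z - (inner ℂ x z : ℂ) • x := by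
      simp [rankOne_apply]
    rw [hEz] at key2
    simp only [map_sub, map_smul] at key2
    have hTz : T z = z - (inner ℂ x z : ℂ) • x + (inner ℂ x z : ℂ) • T x := by
      rw [key2]; abel
    rw [hTz, hTx]
    simp only [add_apply, sub_apply, one_apply, rankOne_apply, smul_apply, smul_smul]
    rw [inner_smul_right, inner_self_one x hx, mul_one]
    show _ = z - _ + _
    module
  · rintro ⟨γ, rfl⟩
    have hEP : (1 - rankOne x x) * rankOne x x = 0 := by
      rw [sub_mul, one_mul, hP2, sub_self]
    have hPE : rankOne x x * (1 - rankOne x x) = 0 := by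
      rw [mul_sub, mul_one, hP2, sub_self]
    constructor
    · rw [mul_add, hE2, mul_smul_comm, hEP, smul_zero, add_zero]
    · rw [add_mul, hE2, smul_mul_assoc, hPE, smul_zero, add_zero]
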